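/- Let d ≥ 1 and let E = (ε_{ik})_{0 ≤ i,k ≤ d} be any real matrix with 0 ≤ ε_{ik} < 1/2 for all i, k. Define w_0, w_1, …, w_d ∈ ℝ^d by (w_0)_k := 1 + ε_{0k} − ε_{00} for k = 1, …, d, and, for 1 ≤ i ≤ d, (w_i)_k := ε_{ik} − ε_{i0} − δ_{ik} for k = 1, …, d (δ the Kronecker delta); these are the normalized representatives of the points −e_i + ε_{i,·} of TA^d. Then the perturbed pyrope Π_d^E := tconv{w_0, w_1, …, w_d} is convex in the ordinary sense, i.e., it is a polytrope. -/
import Mathlib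


open Set

noncomputable section

/-- Extended (homogeneous) coordinates of a point of `TA^d ≅ ℝ^d`:
the 0-th coordinate is normalized to `0`. -/
def ext {d : ℕ} (x : Fin d → ℝ) : Fin (d + 1) → ℝ := Fin.cons 0 x

/-- The tropical combination of `(l, x)` and `(m, y)`. -/
def tropComb {d : ℕ} (l m : ℝ) (x y : Fin d → ℝ) : Fin d → ℝ :=
  fun i => min (l + x i) (m + y i) - min l m

/-- A set is tropically convex if it is closed under tropical combinations. -/
def TropConvex {d : ℕ} (S : Set (Fin d → ℝ)) : Prop :=
  ∀ x ∈ S, ∀ y ∈ S, ∀ l m : ℝ, tropComb l m x y ∈ S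

/-- The tropical convex hull: the intersection of all tropically convex supersets. -/
def tconv {d : ℕ} (V : Set (Fin d → ℝ)) : Set (Fin d → ℝ) :=
  ⋂₀ {S : Set (Fin d → ℝ) | TropConvex S ∧ V ⊆ S}

/-- A tropical polytope is the tropical convex hull of a finite set. -/
def IsTropPolytope {d : ℕ} (P : Set (Fin d → ℝ)) : Prop :=
  ∃ V : Finset (Fin d → ℝ), P = tconv (V : Set (Fin d → ℝ))

/-- A polytrope is a tropical polytope which is also convex in the ordinary sense. -/
def IsPolytrope {d : ℕ} (P : Set (Fin d → ℝ)) : Prop :=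
  IsTropPolytope P ∧ Convex ℝ P

namespace PPaux

lemma ext_succ {d : ℕ} (x : Fin d → ℝ) (k : Fin d) : ext x k.succ = x k := Fin.cons_succ _ _ _
lemma ext_zero {d : ℕ} (x : Fin d → ℝ) : ext x 0 = 0 := rfl

/-- Iterated minimum over `Fin (n+1)`. -/
def homMin : (n : ℕ) → (Fin (n + 1) → ℝ) → ℝ
  | 0, g => g 0
  | n + 1, g => min (homMin n (fun i => g i.castSucc)) (g (Fin.last (n + 1)))

lemma homMin_le : ∀ (n : ℕ) (g : Fin (n + 1) → ℝ) (i : Fin (n + 1)), homMin n g ≤ g i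
  | 0, g, i => by
      have : i = 0 := Fin.eq_zero i
      simp [homMin, this]
  | n + 1, g, i => by
      induction i using Fin.lastCases with
      | last => exact min_le_right _ _
      | cast i => exact le_trans (min_le_left _ _) (homMin_le n _ i)

lemma le_homMin : ∀ (n : ℕ) (g : Fin (n + 1) → ℝ) (c : ℝ), (∀ i, c ≤ g i) → c ≤ homMin n g
  | 0, _, _, h => h 0
  | n + 1, _, c, h => le_min (le_homMin n _ c fun i => h i.castSucc) (h _)

/-- A tropically convex set is closed under (normalized) iterated tropical combinations. -/
lemma homMin_mem {d : ℕ} (S : Set (Fin d → ℝ)) (hS : TropConvex S) :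
    ∀ (n : ℕ) (v : Fin (n + 1) → Fin d → ℝ), (∀ i, v i ∈ S) → ∀ lam : Fin (n + 1) → ℝ,
      (fun k : Fin d => homMin n (fun i => lam i + ext (v i) k.succ)
        - homMin n (fun i => lam i + ext (v i) 0)) ∈ S
  | 0, v, hv, lam => by
      have h : (fun k : Fin d => homMin 0 (fun i => lam i + ext (v i) k.succ)
          - homMin 0 (fun i => lam i + ext (v i) 0)) = v 0 := by
        funext k
        simp [homMin, ext_succ, ext_zero]
      rw [h]; exact hv 0
  | n + 1, v, hv, lam => by
      have hx := homMin_mem S hS n (fun i => v i.castSucc) (fun i => hv _)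
        (fun i => lam i.castSucc)
      have key : (fun k : Fin d => homMin (n+1) (fun i => lam i + ext (v i) k.succ)
          - homMin (n+1) (fun i => lam i + ext (v i) 0))
          = tropComb (homMin n (fun i => lam i.castSucc + ext (v i.castSucc) 0))
              (lam (Fin.last (n+1)))
              (fun k => homMin n (fun i => lam i.castSucc + ext (v i.castSucc) k.succ)
                - homMin n (fun i => lam i.castSucc + ext (v i.castSucc) 0))
              (v (Fin.last (n+1))) := by
        funext k
        simp only [tropComb, homMin, ext_succ, ext_zero, add_zero]
        rw [add_sub_cancel]
      rw [key]
      exact hS _ hx _ (hv _) _ _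

/-- Homogeneous coordinate matrix of the perturbed points. -/
def cmat {d : ℕ} (E : Fin (d + 1) → Fin (d + 1) → ℝ) (i k : Fin (d + 1)) : ℝ :=
  E i k - (if k = i then 1 else 0)

/-- The associated Kleene-star matrix. -/
def bmat {d : ℕ} (E : Fin (d + 1) → Fin (d + 1) → ℝ) (j k : Fin (d + 1)) : ℝ :=
  cmat E j k - cmat E j j

lemma bmat_diag {d : ℕ} (E : Fin (d + 1) → Fin (d + 1) → ℝ) (j : Fin (d + 1)) :
    bmat E j j = 0 := by simp [bmat]

lemma bmat_pos {d : ℕ} (E : Fin (d + 1) → Fin (d + 1) → ℝ)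
    (hE0 : ∀ i k, 0 ≤ E i k) (hE2 : ∀ i k, E i k < 1 / 2)
    {j k : Fin (d + 1)} (h : j ≠ k) : (1:ℝ)/2 < bmat E j k := by
  have h1 := hE0 j k
  have h2 := hE2 j j
  simp only [bmat, cmat, if_neg (Ne.symm h), if_pos rfl, eq_self_iff_true, if_true]
  linarith

lemma bmat_tri {d : ℕ} (E : Fin (d + 1) → Fin (d + 1) → ℝ)
    (hE0 : ∀ i k, 0 ≤ E i k) (hE2 : ∀ i k, E i k < 1 / 2)
    (i j k : Fin (d + 1)) : bmat E i k ≤ bmat E i j + bmat E j k := by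
  rcases eq_or_ne i j with hij | hij
  · rw [hij, bmat_diag]; linarith
  rcases eq_or_ne j k with hjk | hjk
  · rw [hjk, bmat_diag]; linarith
  rcases eq_or_ne i k with hik | hik
  · rw [hik, bmat_diag]
    have h1 := bmat_pos E hE0 hE2 (show k ≠ j from Ne.symm hjk)
    have h2 := bmat_pos E hE0 hE2 hjk
    linarith
  · have h1 := hE0 i j
    have h2 := hE0 j k
    have h3 := hE2 j j
    have h4 := hE2 i k
    simp only [bmat, cmat, if_neg (Ne.symm hij), if_neg (Ne.symm hjk),
      if_neg (Ne.symm hik), if_pos rfl, eq_self_iff_true, if_true]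
    linarith

end PPaux

open PPaux in
/-- For any perturbation matrix `E` with entries in `[0, 1/2)`, the perturbed
pyrope `Π_d^E = tconv{-e_0 + ε_{0,·}, …, -e_d + ε_{d,·}}` (in normalized coordinates:
`(w_0)_k = 1 + ε_{0k} - ε_{00}` and `(w_i)_k = ε_{ik} - ε_{i0} - δ_{ik}` for `i ≥ 1`)
is convex in the ordinary sense, i.e. a polytrope. -/
theorem perturbed_pyrope_is_polytrope {d : ℕ} (hd : 1 ≤ d)
    (E : Fin (d + 1) → Fin (d + 1) → ℝ)
    (hE0 : ∀ i k, 0 ≤ E i k) (hE2 : ∀ i k, E i k < 1 / 2) :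
    IsPolytrope (tconv (Set.range fun i : Fin (d + 1) => fun k : Fin d =>
      if i = 0 then 1 + E 0 k.succ - E 0 0
      else E i k.succ - E i 0 - (if k.succ = i then 1 else 0))) := by
  classical
  set w : Fin (d + 1) → Fin d → ℝ := fun i k =>
    if i = 0 then 1 + E 0 k.succ - E 0 0
    else E i k.succ - E i 0 - (if k.succ = i then 1 else 0) with hw_def
  have hbjj := bmat_diag E
  have htri := bmat_tri E hE0 hE2
  -- homogeneous coordinates of the generating points
  have hwext : ∀ i k, ext (w i) k = cmat E i k - cmat E i 0 := by
    intro i k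
    induction k using Fin.cases with
    | zero => simp [ext_zero, cmat]
    | succ m =>
      rw [ext_succ]
      simp only [hw_def, cmat]
      rcases eq_or_ne i 0 with h0 | h0
      · subst h0
        rw [if_pos rfl, if_pos rfl, if_neg (Fin.succ_ne_zero m)]
        ring
      · rw [if_neg h0, if_neg (Ne.symm h0)]
        ring
  have hwb : ∀ i k, ext (w i) k = bmat E i k - bmat E i 0 := by
    intro i k
    rw [hwext i k]
    simp only [bmat]
    ring
  -- the candidate convex set
  have hVQ : Set.range w ⊆ {x | ∀ j k, ext x k - ext x j ≤ bmat E j k} := by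
    rintro _ ⟨i, rfl⟩ j k
    rw [hwb i k, hwb i j]
    have := htri i j k
    linarith
  have hQtrop : TropConvex {x : Fin d → ℝ | ∀ j k, ext x k - ext x j ≤ bmat E j k} := by
    intro x hx y hy l m j k
    have hZ : ∀ s, ext (tropComb l m x y) s
        = min (l + ext x s) (m + ext y s) - min l m := by
      intro s
      induction s using Fin.cases with
      | zero => simp [ext_zero]
      | succ t => rw [ext_succ]; simp [tropComb, ext_succ]
    rw [hZ k, hZ j]
    have h1 : min (l + ext x k) (m + ext y k) - bmat E j k ≤ l + ext x j := by
      have := hx j k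
      have := min_le_left (l + ext x k) (m + ext y k)
      linarith
    have h2 : min (l + ext x k) (m + ext y k) - bmat E j k ≤ m + ext y j := by
      have := hy j k
      have := min_le_right (l + ext x k) (m + ext y k)
      linarith
    have := le_min h1 h2
    linarith
  have hQconv : Convex ℝ {x : Fin d → ℝ | ∀ j k, ext x k - ext x j ≤ bmat E j k} := by
    intro x hx y hy a a' ha ha' hab j k
    have he : ∀ s, ext (a • x + a' • y) s = a * ext x s + a' * ext y s := by
      intro s
      induction s using Fin.cases with
      | zero => simp [ext_zero]
      | succ t => simp [ext_succ, mul_comm]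
    rw [he k, he j]
    have h1 : a * (ext x k - ext x j) ≤ a * bmat E j k :=
      mul_le_mul_of_nonneg_left (hx j k) ha
    have h2 : a' * (ext y k - ext y j) ≤ a' * bmat E j k :=
      mul_le_mul_of_nonneg_left (hy j k) ha'
    have h3 : a * bmat E j k + a' * bmat E j k = bmat E j k := by
      rw [← add_mul, hab, one_mul]
    nlinarith
  have hsub : {x : Fin d → ℝ | ∀ j k, ext x k - ext x j ≤ bmat E j k}
      ⊆ tconv (Set.range w) := by
    intro x hx S hS
    obtain ⟨hStrop, hVS⟩ := hS
    have hmem := homMin_mem S hStrop d w (fun i => hVS ⟨i, rfl⟩)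
      (fun i => ext x i + bmat E i 0)
    have hcoef : ∀ s : Fin (d + 1),
        homMin d (fun i => (ext x i + bmat E i 0) + ext (w i) s) = ext x s := by
      intro s
      have heq : (fun i => (ext x i + bmat E i 0) + ext (w i) s)
          = fun i => ext x i + bmat E i s := by
        funext i; rw [hwb i s]; ring
      rw [heq]
      refine le_antisymm ?_ (le_homMin d _ _ fun i => by have := hx i s; linarith)
      have h := homMin_le d (fun i => ext x i + bmat E i s) s
      rw [hbjj s] at h
      linarith
    have hxeq : (fun k : Fin d =>
        homMin d (fun i => (ext x i + bmat E i 0) + ext (w i) k.succ)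
        - homMin d (fun i => (ext x i + bmat E i 0) + ext (w i) 0)) = x := by
      funext k
      rw [hcoef k.succ, hcoef 0, ext_succ, ext_zero, sub_zero]
    rwa [hxeq] at hmem
  have htv : tconv (Set.range w) = {x : Fin d → ℝ | ∀ j k, ext x k - ext x j ≤ bmat E j k} :=
    subset_antisymm (sInter_subset_of_mem ⟨hQtrop, hVQ⟩) hsub
  constructor
  · exact ⟨(Set.finite_range w).toFinset, by rw [Set.Finite.coe_toFinset]⟩
  · rw [htv]; exact hQconv
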